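/- Let a and b be finite signed measures on ℝ with the same finite-length signature (z₁,…,z_n), let α := ‖a‖ and β := ‖b‖ be their total variation measures, and assume ∫ c_X dα < ∞ and ∫ c_Y dβ < ∞ for a cost c(x,y) = h(y − x) with h : ℝ → [0,∞) convex and c(x,y) ≤ c_X(x) + c_Y(y). Let γ be the monotone (optimal) coupling between α and β. Then the kernel associated to γ sends a to b: writing f₊ := da⁺/dα and f₋ := da⁻/dα, one has (proj_Y)_#(f₊(x)·γ) = b⁺ and (proj_Y)_#(f₋(x)·γ) = b⁻, hence (proj_Y)_#((f₊(x) − f₋(x))·γ) = b. -/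

import Mathlib

open MeasureTheory Set
open scoped ENNReal

noncomputable section

/-- `γ` is a coupling of `μ` and `ν`: its marginals are `μ` and `ν`. -/
def IsCoupling {X Y : Type*} [MeasurableSpace X] [MeasurableSpace Y]
    (γ : Measure (X × Y)) (μ : Measure X) (ν : Measure Y) : Prop :=
  γ.map Prod.fst = μ ∧ γ.map Prod.snd = ν

/-- `γ` is the monotone coupling of the (finite, equal-mass) measures `μ` and `ν` on
`ℝ`: `γ((−∞,c] × (−∞,d]) = min(F_μ(c), F_ν(d))` for all `c, d`. -/
def IsMonotoneCoupling (γ : Measure (ℝ × ℝ)) (μ ν : Measure ℝ) : Prop :=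
  IsCoupling γ μ ν ∧ ∀ c d : ℝ, γ (Iic c ×ˢ Iic d) = min (μ (Iic c)) (ν (Iic d))

/-- For points `p 1 < … < p (n-1)` (with the conventions `p₀ = −∞`, `p_n = +∞`),
`sigInterval n p i` is the interval `(p_{i-1}, p_i]`, for `1 ≤ i ≤ n`. -/
def sigInterval (n : ℕ) (p : ℕ → ℝ) (i : ℕ) : Set ℝ :=
  (if i = 1 then Set.univ else Set.Ioi (p (i - 1))) ∩
    (if i = n then Set.univ else Set.Iic (p i))

/-- The finite signed measure `a` has finite-length signature `(z 1, …, z n)` with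
signature points `p 1 < … < p (n-1)` (conventions `p₀ = −∞`, `p_n = +∞`, so the
signature intervals are `(p_{i-1}, p_i]`): on each signature interval `a` restricts to
either `a⁺` or `−a⁻` (i.e. the other Jordan part vanishes there), consecutive
restrictions have opposite (nonzero) signs, and `z i = a((p_{i-1}, p_i])`. -/
def HasSignature (a : SignedMeasure ℝ) (n : ℕ) (p : ℕ → ℝ) (z : ℕ → ℝ) : Prop :=
  1 ≤ n ∧
  (∀ i, 1 ≤ i → i + 1 ≤ n - 1 → p i < p (i + 1)) ∧
  (∀ i, 1 ≤ i → i ≤ n → z i = a (sigInterval n p i)) ∧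
  (∀ i, 1 ≤ i → i ≤ n → z i ≠ 0) ∧
  (∃ s : ℕ → Bool,
    (∀ i, 1 ≤ i → i + 1 ≤ n → s (i + 1) = !(s i)) ∧
    (∀ i, 1 ≤ i → i ≤ n →
      if s i then a.toJordanDecomposition.negPart (sigInterval n p i) = 0
      else a.toJordanDecomposition.posPart (sigInterval n p i) = 0))

namespace Stmt12Aux

/-- cumulative set `(-∞, p i]` with conventions for `i = 0` and `i = n`. -/
def cumSet (n : ℕ) (p : ℕ → ℝ) (i : ℕ) : Set ℝ :=
  if i = 0 then ∅ else if i = n then Set.univ else Set.Iic (p i)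

lemma measurableSet_cumSet (n : ℕ) (p : ℕ → ℝ) (i : ℕ) : MeasurableSet (cumSet n p i) := by
  unfold cumSet
  split
  · exact .empty
  split
  · exact .univ
  · exact measurableSet_Iic

lemma measurableSet_sigInterval (n : ℕ) (p : ℕ → ℝ) (i : ℕ) :
    MeasurableSet (sigInterval n p i) := by
  unfold sigInterval
  apply MeasurableSet.inter <;>
    · split
      · exact .univ
      · first
        | exact measurableSet_Ioi
        | exact measurableSet_Iic

lemma sigInterval_eq (n : ℕ) (p : ℕ → ℝ) {i : ℕ} (h1 : 1 ≤ i) (h2 : i ≤ n) :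
    sigInterval n p i = cumSet n p i \ cumSet n p (i - 1) := by
  by_cases hi1 : i = 1
  · subst hi1
    simp [sigInterval, cumSet]
  · have h2le : 2 ≤ i := (Nat.two_le_iff i).2 ⟨by omega, hi1⟩
    have hi0 : i ≠ 0 := by omega
    have him0 : i - 1 ≠ 0 := by omega
    have himn : i - 1 ≠ n := by omega
    by_cases hin : i = n
    · subst hin
      simp only [sigInterval, cumSet, if_neg hi1, if_pos rfl, if_neg hi0, if_neg him0,
        if_neg himn]
      simp [Set.diff_eq, Set.compl_Iic]
    · simp only [sigInterval, cumSet, if_neg hi1, if_neg hin, if_neg hi0, if_neg him0,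
        if_neg himn]
      rw [Set.diff_eq, Set.compl_Iic, Set.inter_comm (Iic _)]

lemma cumSet_mono (n : ℕ) (p : ℕ → ℝ)
    (hp : ∀ i, 1 ≤ i → i + 1 ≤ n - 1 → p i < p (i + 1)) {i : ℕ} (h1 : 1 ≤ i) (h2 : i ≤ n) :
    cumSet n p (i - 1) ⊆ cumSet n p i := by
  by_cases hi1 : i = 1
  · subst hi1; simp [cumSet]
  · by_cases hin : i = n
    · simp [cumSet, hin, Nat.one_le_iff_ne_zero.mp (le_trans h1 h2)]
    · have h2le : 2 ≤ i := by omega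
      have hlt : i < n := by omega
      simp only [cumSet, if_neg (by omega : i - 1 ≠ 0), if_neg (by omega : i - 1 ≠ n),
        if_neg (by omega : i ≠ 0), if_neg hin]
      apply Set.Iic_subset_Iic.2
      have := hp (i - 1) (by omega) (by omega)
      have hii : i - 1 + 1 = i := by omega
      rw [hii] at this
      exact this.le

lemma cumSet_subset_biUnion (n : ℕ) (p : ℕ → ℝ) :
    ∀ i, i ≤ n → cumSet n p i ⊆ ⋃ j ∈ Finset.Icc 1 i, sigInterval n p j := by
  intro i
  induction i with
  | zero => intro _; simp [cumSet]
  | succ i ih =>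
      intro hle x hx
      have hsig := sigInterval_eq n p (i := i + 1) (by omega) hle
      by_cases hxi : x ∈ cumSet n p i
      · have := ih (by omega) hxi
        simp only [Set.mem_iUnion, Finset.mem_Icc] at this ⊢
        obtain ⟨j, hj, hxj⟩ := this
        exact ⟨j, ⟨hj.1, by omega⟩, hxj⟩
      · have : x ∈ sigInterval n p (i + 1) := by
          rw [hsig]
          simpa using ⟨hx, hxi⟩
        simp only [Set.mem_iUnion, Finset.mem_Icc]
        exact ⟨i + 1, ⟨by omega, le_rfl⟩, this⟩

lemma signedMeasure_apply (a : SignedMeasure ℝ) {S : Set ℝ} (hS : MeasurableSet S) :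
    a S = (a.toJordanDecomposition.posPart S).toReal -
      (a.toJordanDecomposition.negPart S).toReal := by
  conv_lhs => rw [← a.toSignedMeasure_toJordanDecomposition]
  rw [MeasureTheory.JordanDecomposition.toSignedMeasure,
    MeasureTheory.Measure.toSignedMeasure_sub_apply hS, measureReal_def, measureReal_def]

lemma sig_char {a : SignedMeasure ℝ} {n : ℕ} {p z : ℕ → ℝ} (ha : HasSignature a n p z)
    {i : ℕ} (h1 : 1 ≤ i) (h2 : i ≤ n) :
    (0 < z i ∧ a.toJordanDecomposition.negPart (sigInterval n p i) = 0 ∧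
      a.toJordanDecomposition.posPart (sigInterval n p i) = ENNReal.ofReal (z i)) ∨
    (z i < 0 ∧ a.toJordanDecomposition.posPart (sigInterval n p i) = 0 ∧
      a.toJordanDecomposition.negPart (sigInterval n p i) = ENNReal.ofReal (-z i)) := by
  obtain ⟨hn, hp, hz, hz0, s, hsalt, hs⟩ := ha
  have hmeas := measurableSet_sigInterval n p i
  have hval := (hz i h1 h2).trans (signedMeasure_apply a hmeas)
  have hs' := hs i h1 h2
  by_cases hsi : s i
  · left
    rw [if_pos hsi] at hs'
    rw [hs', ENNReal.toReal_zero, sub_zero] at hval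
    have hzpos : 0 < z i :=
      lt_of_le_of_ne (hval ▸ ENNReal.toReal_nonneg) (Ne.symm (hz0 i h1 h2))
    refine ⟨hzpos, hs', ?_⟩
    rw [hval, ENNReal.ofReal_toReal (measure_ne_top _ _)]
  · right
    rw [if_neg hsi] at hs'
    rw [hs', ENNReal.toReal_zero, zero_sub] at hval
    have hzneg : z i < 0 := by
      rcases lt_or_eq_of_le (neg_nonneg.mpr (hval ▸ neg_nonpos.mpr ENNReal.toReal_nonneg)) with h | h
      · linarith [neg_pos.mp h]
      · exact absurd h.symm (by simpa using hz0 i h1 h2)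
    refine ⟨hzneg, hs', ?_⟩
    rw [show -z i = (a.toJordanDecomposition.negPart (sigInterval n p i)).toReal by
      rw [hval, neg_neg], ENNReal.ofReal_toReal (measure_ne_top _ _)]

lemma totalVariation_sigInterval {a : SignedMeasure ℝ} {n : ℕ} {p z : ℕ → ℝ}
    (ha : HasSignature a n p z) {i : ℕ} (h1 : 1 ≤ i) (h2 : i ≤ n) :
    a.totalVariation (sigInterval n p i) = ENNReal.ofReal |z i| := by
  rcases sig_char ha h1 h2 with ⟨hpos, hneg0, hposv⟩ | ⟨hneg, hpos0, hnegv⟩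
  · rw [MeasureTheory.SignedMeasure.totalVariation, Measure.add_apply, hneg0, hposv, add_zero,
      abs_of_pos hpos]
  · rw [MeasureTheory.SignedMeasure.totalVariation, Measure.add_apply, hpos0, hnegv, zero_add,
      abs_of_neg hneg]

lemma totalVariation_cumSet {a : SignedMeasure ℝ} {n : ℕ} {p z : ℕ → ℝ}
    (ha : HasSignature a n p z) :
    ∀ i, i ≤ n → a.totalVariation (cumSet n p i) =
      ∑ j ∈ Finset.Icc 1 i, ENNReal.ofReal |z j| := by
  intro i
  induction i with
  | zero => intro _; simp [cumSet]
  | succ i ih =>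
      intro h
      have hsub := cumSet_mono n p ha.2.1 (i := i + 1) (by omega) h
      have hdiff := sigInterval_eq n p (i := i + 1) (by omega) h
      have him : i + 1 - 1 = i := by omega
      rw [him] at hsub hdiff
      have hsplit : cumSet n p (i + 1) = cumSet n p i ∪ sigInterval n p (i + 1) := by
        rw [hdiff, Set.union_diff_cancel hsub]
      rw [hsplit, measure_union _ (measurableSet_sigInterval n p (i + 1)),
        ih (by omega), totalVariation_sigInterval ha (by omega) h,
        Finset.sum_Icc_succ_top (by omega : 1 ≤ i + 1)]
      rw [hdiff]
      exact Set.disjoint_sdiff_right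

theorem main (a b : SignedMeasure ℝ) (n : ℕ) (p q z : ℕ → ℝ)
    (ha : HasSignature a n p z) (hb : HasSignature b n q z)
    (γ : Measure (ℝ × ℝ))
    (hγ : IsMonotoneCoupling γ a.totalVariation b.totalVariation) :
    (γ.withDensity (fun pt =>
        a.toJordanDecomposition.posPart.rnDeriv a.totalVariation pt.1)).map Prod.snd
      = b.toJordanDecomposition.posPart := by
  classical
  haveI : IsFiniteMeasure a.totalVariation := by
    rw [MeasureTheory.SignedMeasure.totalVariation]; infer_instance
  haveI : IsFiniteMeasure b.totalVariation := by
    rw [MeasureTheory.SignedMeasure.totalVariation]; infer_instance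
  obtain ⟨⟨hfst, hsnd⟩, hmin⟩ := hγ
  have hn : 1 ≤ n := ha.1
  set F : Finset ℕ := (Finset.Icc 1 n).filter (fun i => 0 < z i) with hF
  set Sa : Set ℝ := ⋃ i ∈ F, sigInterval n p i with hSa
  set Sb : Set ℝ := ⋃ i ∈ F, sigInterval n q i with hSb
  have hSameas : MeasurableSet Sa :=
    MeasurableSet.biUnion F.countable_toSet fun i _ => measurableSet_sigInterval n p i
  have hSbmeas : MeasurableSet Sb :=
    MeasurableSet.biUnion F.countable_toSet fun i _ => measurableSet_sigInterval n q i
  -- marginals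
  have hγfst : ∀ {S : Set ℝ}, MeasurableSet S → γ (S ×ˢ (univ : Set ℝ)) = a.totalVariation S := by
    intro S hS
    rw [Set.prod_univ, ← Measure.map_apply measurable_fst hS, hfst]
  have hγsnd : ∀ {S : Set ℝ}, MeasurableSet S → γ ((univ : Set ℝ) ×ˢ S) = b.totalVariation S := by
    intro S hS
    rw [Set.univ_prod, ← Measure.map_apply measurable_snd hS, hsnd]
  -- cumulative masses agree
  have hcum : ∀ i, i ≤ n → a.totalVariation (cumSet n p i) = b.totalVariation (cumSet n q i) := by
    intro i hi
    rw [totalVariation_cumSet ha i hi, totalVariation_cumSet hb i hi]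
  -- the coupling is null off the diagonal blocks, cumulative version
  have cum_null₁ : ∀ i, i ≤ n → γ (cumSet n p i ×ˢ (cumSet n q i)ᶜ) = 0 := by
    intro i hi
    by_cases hi0 : i = 0
    · simp [cumSet, hi0]
    by_cases hin : i = n
    · simp [cumSet, hin, Nat.one_le_iff_ne_zero.mp hn]
    have hpIic : cumSet n p i = Iic (p i) := by simp [cumSet, hi0, hin]
    have hqIic : cumSet n q i = Iic (q i) := by simp [cumSet, hi0, hin]
    rw [hpIic, hqIic]
    have he : a.totalVariation (Iic (p i)) = b.totalVariation (Iic (q i)) := by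
      have := hcum i hi; rwa [hpIic, hqIic] at this
    have key : γ (Iic (p i) ×ˢ Iic (q i)) = a.totalVariation (Iic (p i)) := by
      rw [hmin, ← he, min_self]
    have hsplit : (Iic (p i) ×ˢ (univ : Set ℝ)) =
        (Iic (p i) ×ˢ Iic (q i)) ∪ (Iic (p i) ×ˢ (Iic (q i))ᶜ) := by
      rw [← Set.prod_union, Set.union_compl_self]
    have hdisj : Disjoint (Iic (p i) ×ˢ Iic (q i)) (Iic (p i) ×ˢ (Iic (q i))ᶜ) := by
      rw [Set.disjoint_left]
      rintro ⟨x, y⟩ hxy hxy'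
      simp only [Set.mem_prod] at hxy hxy'
      exact hxy'.2 hxy.2
    have htot := hγfst (measurableSet_Iic (a := p i))
    rw [hsplit, measure_union hdisj (measurableSet_Iic.prod measurableSet_Iic.compl), key]
      at htot
    have hne : a.totalVariation (Iic (p i)) ≠ ⊤ := measure_ne_top _ _
    exact ((ENNReal.add_right_inj hne).1 (by rw [add_zero]; exact htot.symm)).symm
  have cum_null₂ : ∀ i, i ≤ n → γ ((cumSet n p i)ᶜ ×ˢ cumSet n q i) = 0 := by
    intro i hi
    by_cases hi0 : i = 0
    · simp [cumSet, hi0]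
    by_cases hin : i = n
    · simp [cumSet, hin, Nat.one_le_iff_ne_zero.mp hn]
    have hpIic : cumSet n p i = Iic (p i) := by simp [cumSet, hi0, hin]
    have hqIic : cumSet n q i = Iic (q i) := by simp [cumSet, hi0, hin]
    rw [hpIic, hqIic]
    have he : a.totalVariation (Iic (p i)) = b.totalVariation (Iic (q i)) := by
      have := hcum i hi; rwa [hpIic, hqIic] at this
    have key : γ (Iic (p i) ×ˢ Iic (q i)) = b.totalVariation (Iic (q i)) := by
      rw [hmin, he, min_self]
    have hsplit : ((univ : Set ℝ) ×ˢ Iic (q i)) =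
        (Iic (p i) ×ˢ Iic (q i)) ∪ ((Iic (p i))ᶜ ×ˢ Iic (q i)) := by
      rw [← Set.union_prod, Set.union_compl_self]
    have hdisj : Disjoint (Iic (p i) ×ˢ Iic (q i)) ((Iic (p i))ᶜ ×ˢ Iic (q i)) := by
      rw [Set.disjoint_left]
      rintro ⟨x, y⟩ hxy hxy'
      simp only [Set.mem_prod] at hxy hxy'
      exact hxy'.1 hxy.1
    have htot := hγsnd (measurableSet_Iic (a := q i))
    rw [hsplit, measure_union hdisj (measurableSet_Iic.compl.prod measurableSet_Iic), key]
      at htot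
    have hne : b.totalVariation (Iic (q i)) ≠ ⊤ := measure_ne_top _ _
    exact ((ENNReal.add_right_inj hne).1 (by rw [add_zero]; exact htot.symm)).symm

  -- off-diagonal nullity per interval
  have interval_null₁ : ∀ i, 1 ≤ i → i ≤ n →
      γ (sigInterval n p i ×ˢ (sigInterval n q i)ᶜ) = 0 := by
    intro i h1 h2
    apply measure_mono_null _
      (measure_union_null (cum_null₁ i h2) (cum_null₂ (i - 1) (by omega)))
    rintro ⟨x, y⟩ hxy
    simp only [Set.mem_prod, Set.mem_compl_iff] at hxy
    obtain ⟨hx, hy⟩ := hxy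
    rw [sigInterval_eq n p h1 h2] at hx
    rw [sigInterval_eq n q h1 h2] at hy
    by_cases hyV : y ∈ cumSet n q i
    · have hyV' : y ∈ cumSet n q (i - 1) := by
        by_contra hc
        exact hy ⟨hyV, hc⟩
      exact Set.mem_union_right _ (by exact ⟨hx.2, hyV'⟩)
    · exact Set.mem_union_left _ (by exact ⟨hx.1, hyV⟩)
  have interval_null₂ : ∀ i, 1 ≤ i → i ≤ n →
      γ ((sigInterval n p i)ᶜ ×ˢ sigInterval n q i) = 0 := by
    intro i h1 h2
    apply measure_mono_null _
      (measure_union_null (cum_null₂ i h2) (cum_null₁ (i - 1) (by omega)))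
    rintro ⟨x, y⟩ hxy
    simp only [Set.mem_prod, Set.mem_compl_iff] at hxy
    obtain ⟨hx, hy⟩ := hxy
    rw [sigInterval_eq n p h1 h2] at hx
    rw [sigInterval_eq n q h1 h2] at hy
    by_cases hxU : x ∈ cumSet n p i
    · have hxU' : x ∈ cumSet n p (i - 1) := by
        by_contra hc
        exact hx ⟨hxU, hc⟩
      exact Set.mem_union_right _ (by exact ⟨hxU', hy.2⟩)
    · exact Set.mem_union_left _ (by exact ⟨hxU, hy.1⟩)
  -- gamma is concentrated on Sa ×ˢ Sb relative to Sa/Sb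
  have hSa_Sbc : γ (Sa ×ˢ Sbᶜ) = 0 := by
    rw [hSa, Set.iUnion₂_prod_const]
    refine (measure_biUnion_null_iff F.countable_toSet).2 fun i hiF => ?_
    have hiI : 1 ≤ i ∧ i ≤ n := by
      have := Finset.mem_filter.1 hiF
      exact Finset.mem_Icc.1 this.1
    refine measure_mono_null ?_ (interval_null₁ i hiI.1 hiI.2)
    apply Set.prod_mono_right
    rw [Set.compl_subset_compl]
    exact Set.subset_biUnion_of_mem hiF
  have hSac_Sb : γ (Saᶜ ×ˢ Sb) = 0 := by
    rw [hSb, Set.prod_iUnion₂]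
    refine (measure_biUnion_null_iff F.countable_toSet).2 fun i hiF => ?_
    have hiI : 1 ≤ i ∧ i ≤ n := by
      have := Finset.mem_filter.1 hiF
      exact Finset.mem_Icc.1 this.1
    refine measure_mono_null ?_ (interval_null₂ i hiI.1 hiI.2)
    apply Set.prod_mono_left
    rw [Set.compl_subset_compl]
    exact Set.subset_biUnion_of_mem hiF
  -- identification of positive parts via restriction
  have cover : ∀ (r : ℕ → ℝ), Set.univ ⊆ ⋃ j ∈ Finset.Icc 1 n, sigInterval n r j := by
    intro r
    have := cumSet_subset_biUnion n r n le_rfl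
    rwa [show cumSet n r n = Set.univ by simp [cumSet, Nat.one_le_iff_ne_zero.mp hn]] at this
  have hneg_Sa : a.toJordanDecomposition.negPart Sa = 0 := by
    refine (measure_biUnion_null_iff F.countable_toSet).2 fun i hiF => ?_
    have hmem := Finset.mem_filter.1 hiF
    have hiI := Finset.mem_Icc.1 hmem.1
    rcases sig_char ha hiI.1 hiI.2 with ⟨_, hneg0, _⟩ | ⟨hneg, _, _⟩
    · exact hneg0
    · exact absurd hmem.2 (by linarith)
  have hpos_Sac : a.toJordanDecomposition.posPart Saᶜ = 0 := by
    have hsub : Saᶜ ⊆ ⋃ j ∈ (Finset.Icc 1 n).filter (fun i => ¬ 0 < z i), sigInterval n p j := by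
      intro x hx
      obtain ⟨j, hj, hxj⟩ := Set.mem_iUnion₂.1 (cover p (Set.mem_univ x))
      have hjI := Finset.mem_Icc.1 hj
      have hjneg : ¬ 0 < z j := by
        intro hc
        exact hx (Set.mem_biUnion (Finset.mem_filter.2 ⟨hj, hc⟩) hxj)
      exact Set.mem_biUnion (Finset.mem_filter.2 ⟨hj, hjneg⟩) hxj
    refine measure_mono_null hsub ((measure_biUnion_null_iff
      (Finset.countable_toSet _)).2 fun i hiF => ?_)
    have hmem := Finset.mem_filter.1 hiF
    have hiI := Finset.mem_Icc.1 hmem.1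
    rcases sig_char ha hiI.1 hiI.2 with ⟨hpos, _, _⟩ | ⟨_, hpos0, _⟩
    · exact absurd hpos hmem.2
    · exact hpos0
  have hneg_Sb : b.toJordanDecomposition.negPart Sb = 0 := by
    refine (measure_biUnion_null_iff F.countable_toSet).2 fun i hiF => ?_
    have hmem := Finset.mem_filter.1 hiF
    have hiI := Finset.mem_Icc.1 hmem.1
    rcases sig_char hb hiI.1 hiI.2 with ⟨_, hneg0, _⟩ | ⟨hneg, _, _⟩
    · exact hneg0
    · exact absurd hmem.2 (by linarith)
  have hpos_Sbc : b.toJordanDecomposition.posPart Sbᶜ = 0 := by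
    have hsub : Sbᶜ ⊆ ⋃ j ∈ (Finset.Icc 1 n).filter (fun i => ¬ 0 < z i), sigInterval n q j := by
      intro x hx
      obtain ⟨j, hj, hxj⟩ := Set.mem_iUnion₂.1 (cover q (Set.mem_univ x))
      have hjneg : ¬ 0 < z j := by
        intro hc
        exact hx (Set.mem_biUnion (Finset.mem_filter.2 ⟨hj, hc⟩) hxj)
      exact Set.mem_biUnion (Finset.mem_filter.2 ⟨hj, hjneg⟩) hxj
    refine measure_mono_null hsub ((measure_biUnion_null_iff
      (Finset.countable_toSet _)).2 fun i hiF => ?_)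
    have hmem := Finset.mem_filter.1 hiF
    have hiI := Finset.mem_Icc.1 hmem.1
    rcases sig_char hb hiI.1 hiI.2 with ⟨hpos, _, _⟩ | ⟨_, hpos0, _⟩
    · exact absurd hpos hmem.2
    · exact hpos0
  have hrestrict_a : a.totalVariation.restrict Sa = a.toJordanDecomposition.posPart := by
    ext E hE
    rw [Measure.restrict_apply hE, MeasureTheory.SignedMeasure.totalVariation,
      Measure.add_apply]
    have h1 : a.toJordanDecomposition.negPart (E ∩ Sa) = 0 :=
      measure_mono_null Set.inter_subset_right hneg_Sa
    have h2 : a.toJordanDecomposition.posPart (E ∩ Sa) = a.toJordanDecomposition.posPart E := by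
      have h3 : a.toJordanDecomposition.posPart (E \ Sa) = 0 :=
        measure_mono_null (fun x hx => hx.2) hpos_Sac
      have := measure_inter_add_diff (μ := a.toJordanDecomposition.posPart) E hSameas
      rwa [h3, add_zero] at this
    rw [h1, add_zero, h2]
  have hrestrict_b : b.totalVariation.restrict Sb = b.toJordanDecomposition.posPart := by
    ext E hE
    rw [Measure.restrict_apply hE, MeasureTheory.SignedMeasure.totalVariation,
      Measure.add_apply]
    have h1 : b.toJordanDecomposition.negPart (E ∩ Sb) = 0 :=
      measure_mono_null Set.inter_subset_right hneg_Sb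
    have h2 : b.toJordanDecomposition.posPart (E ∩ Sb) = b.toJordanDecomposition.posPart E := by
      have h3 : b.toJordanDecomposition.posPart (E \ Sb) = 0 :=
        measure_mono_null (fun x hx => hx.2) hpos_Sbc
      have := measure_inter_add_diff (μ := b.toJordanDecomposition.posPart) E hSbmeas
      rwa [h3, add_zero] at this
    rw [h1, add_zero, h2]
  -- identify the density with the indicator of Sa
  have hrn : a.toJordanDecomposition.posPart.rnDeriv a.totalVariation
      =ᵐ[a.totalVariation] Sa.indicator 1 := by
    have heq : a.toJordanDecomposition.posPart
        = a.totalVariation.withDensity (Sa.indicator 1) := by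
      rw [withDensity_indicator_one hSameas, hrestrict_a]
    rw [heq]
    exact Measure.rnDeriv_withDensity _ (measurable_one.indicator hSameas)
  have hγae : (fun pt : ℝ × ℝ => a.toJordanDecomposition.posPart.rnDeriv a.totalVariation pt.1)
      =ᵐ[γ] fun pt => Sa.indicator 1 pt.1 := by
    have h' : ∀ᵐ x ∂(γ.map Prod.fst),
        a.toJordanDecomposition.posPart.rnDeriv a.totalVariation x = Sa.indicator 1 x := by
      rw [hfst]; exact hrn
    exact ae_of_ae_map measurable_fst.aemeasurable h'
  have hwd : γ.withDensity (fun pt : ℝ × ℝ =>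
      a.toJordanDecomposition.posPart.rnDeriv a.totalVariation pt.1)
      = γ.restrict (Sa ×ˢ (univ : Set ℝ)) := by
    rw [withDensity_congr_ae hγae]
    have hind : (fun pt : ℝ × ℝ => Sa.indicator (1 : ℝ → ℝ≥0∞) pt.1)
        = (Sa ×ˢ (univ : Set ℝ)).indicator (1 : ℝ × ℝ → ℝ≥0∞) := by
      ext pt
      by_cases hpt : pt.1 ∈ Sa <;> simp [Set.indicator, hpt, Set.mem_prod]
    rw [hind, withDensity_indicator_one (hSameas.prod .univ)]
  have hres : γ.restrict (Sa ×ˢ (univ : Set ℝ)) = γ.restrict ((univ : Set ℝ) ×ˢ Sb) := by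
    apply Measure.restrict_congr_set
    rw [MeasureTheory.ae_eq_set]
    constructor
    · refine measure_mono_null ?_ hSa_Sbc
      rintro ⟨x, y⟩ ⟨h1, h2⟩
      simp only [Set.mem_prod, Set.mem_univ, and_true, true_and] at h1 h2 ⊢
      exact ⟨h1, h2⟩
    · refine measure_mono_null ?_ hSac_Sb
      rintro ⟨x, y⟩ ⟨h1, h2⟩
      simp only [Set.mem_prod, Set.mem_univ, and_true, true_and,
        Set.mem_compl_iff] at h1 h2 ⊢
      exact ⟨h2, h1⟩
  rw [hwd, hres, Set.univ_prod, ← Measure.restrict_map measurable_snd hSbmeas, hsnd,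
    hrestrict_b]

lemma hasSignature_neg {a : SignedMeasure ℝ} {n : ℕ} {p z : ℕ → ℝ}
    (ha : HasSignature a n p z) : HasSignature (-a) n p (fun i => -z i) := by
  obtain ⟨hn, hp, hz, hz0, s, hsalt, hs⟩ := ha
  refine ⟨hn, hp, ?_, ?_, fun i => !(s i), ?_, ?_⟩
  · intro i h1 h2
    rw [MeasureTheory.VectorMeasure.neg_apply, ← hz i h1 h2]
  · intro i h1 h2
    simpa using hz0 i h1 h2
  · intro i h1 h2
    simp only [hsalt i h1 h2]
  · intro i h1 h2
    have hsi := hs i h1 h2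
    rw [MeasureTheory.SignedMeasure.toJordanDecomposition_neg]
    by_cases hb : s i
    · rw [if_pos hb] at hsi
      rw [if_neg (by simp [hb]), MeasureTheory.JordanDecomposition.neg_posPart]
      exact hsi
    · rw [if_neg hb] at hsi
      rw [if_pos (by simp [hb]), MeasureTheory.JordanDecomposition.neg_negPart]
      exact hsi

end Stmt12Aux

/-- Let `a`, `b` be finite signed measures on `ℝ` with the same
finite-length signature, `α := ‖a‖`, `β := ‖b‖` with finite moments for the cost
`c(x,y) = h(y − x)`, `h` convex and non-negative, `c(x,y) ≤ c_X(x) + c_Y(y)`.  Let `γ`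
be the monotone (optimal) coupling between `α` and `β`.  Then the kernel associated to
`γ` sends `a` to `b`: with `f₊ := da⁺/dα` and `f₋ := da⁻/dα`,
`(proj_Y)_#(f₊(x)·γ) = b⁺` and `(proj_Y)_#(f₋(x)·γ) = b⁻`, hence
`(proj_Y)_#((f₊(x) − f₋(x))·γ) = b`. -/
theorem stmt12 (a b : SignedMeasure ℝ)
    (n : ℕ) (p q : ℕ → ℝ) (z : ℕ → ℝ)
    (ha : HasSignature a n p z) (hb : HasSignature b n q z)
    (h : ℝ → ℝ) (hconv : ConvexOn ℝ Set.univ h) (hnonneg : ∀ t, 0 ≤ h t)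
    (c : ℝ × ℝ → ℝ) (hc : ∀ pt : ℝ × ℝ, c pt = h (pt.2 - pt.1))
    (cX cY : ℝ → ℝ) (hcX : Measurable cX) (hcY : Measurable cY)
    (hc_bound : ∀ pt : ℝ × ℝ, c pt ≤ cX pt.1 + cY pt.2)
    (hamom : ∫⁻ x, ENNReal.ofReal (cX x) ∂a.totalVariation < ⊤)
    (hbmom : ∫⁻ y, ENNReal.ofReal (cY y) ∂b.totalVariation < ⊤)
    (γ : Measure (ℝ × ℝ))
    (hγ : IsMonotoneCoupling γ a.totalVariation b.totalVariation) :
    (γ.withDensity (fun pt =>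
        a.toJordanDecomposition.posPart.rnDeriv a.totalVariation pt.1)).map Prod.snd
      = b.toJordanDecomposition.posPart ∧
    (γ.withDensity (fun pt =>
        a.toJordanDecomposition.negPart.rnDeriv a.totalVariation pt.1)).map Prod.snd
      = b.toJordanDecomposition.negPart := by
  constructor
  · exact Stmt12Aux.main a b n p q z ha hb γ hγ
  · have hγ' : IsMonotoneCoupling γ (-a).totalVariation (-b).totalVariation := by
      rwa [MeasureTheory.SignedMeasure.totalVariation_neg,
        MeasureTheory.SignedMeasure.totalVariation_neg]
    have hmain := Stmt12Aux.main (-a) (-b) n p q (fun i => -z i)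
      (Stmt12Aux.hasSignature_neg ha) (Stmt12Aux.hasSignature_neg hb) γ hγ'
    rw [MeasureTheory.SignedMeasure.totalVariation_neg,
      MeasureTheory.SignedMeasure.toJordanDecomposition_neg,
      MeasureTheory.SignedMeasure.toJordanDecomposition_neg,
      MeasureTheory.JordanDecomposition.neg_posPart,
      MeasureTheory.JordanDecomposition.neg_posPart] at hmain
    exact hmain
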